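/- Dangling edge safety for the ICS of the DD graph: for every well-formed operation context, the compositional realization (node set as add-wins set; edge set as add-wins set of pairs, where rmvN(n) translates to del of every edge incident to n that was added visibly before the removal) produces a state with no dangling edges. -/
import Mathlib

inductive GOp (N : Type) where
  | addN (n : N)
  | rmvN (n : N)
  | addE (n m : N)
  | rmvE (n m : N)

def visible {E : Type} (vis : E → E → Prop) : E → E → Prop :=
  Relation.TransGen vis

/-- Derived NodeSet add events: addN(n), or addE incident to n. -/
def nAdd {E N : Type} (op : E → GOp N) (e : E) (n : N) : Prop :=
  op e = GOp.addN n ∨ ∃ m, op e = GOp.addE n m ∨ op e = GOp.addE m n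

/-- Derived NodeSet del events: rmvN(n). -/
def nDel {E N : Type} (op : E → GOp N) (e : E) (n : N) : Prop :=
  op e = GOp.rmvN n

/-- Derived EdgeSet add events: addE(n,m). -/
def eAdd {E N : Type} (op : E → GOp N) (e : E) (n m : N) : Prop :=
  op e = GOp.addE n m

/-- Derived EdgeSet del events: rmvE(n,m), or a rmvN of an endpoint for which
an addE event creating this edge is visible before the removal. -/
def eDel {E N : Type} (op : E → GOp N) (vis : E → E → Prop) (e : E) (n m : N) : Prop :=
  op e = GOp.rmvE n m ∨
  (op e = GOp.rmvN n ∧ ∃ a, op a = GOp.addE n m ∧ visible vis a e) ∨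
  (op e = GOp.rmvN m ∧ ∃ a, op a = GOp.addE n m ∧ visible vis a e)

/-- ICS node set: add-wins. -/
def icsNodePresent {E N : Type} (op : E → GOp N) (vis : E → E → Prop) (n : N) : Prop :=
  ∃ e, nAdd op e n ∧ ¬ ∃ e', nDel op e' n ∧ visible vis e e'

/-- ICS edge set: add-wins on pairs. -/
def icsEdgePresent {E N : Type} (op : E → GOp N) (vis : E → E → Prop) (n m : N) : Prop :=
  ∃ e, eAdd op e n m ∧ ¬ ∃ e', eDel op vis e' n m ∧ visible vis e e'

/-- Well-formedness: addE and rmvN only occur for nodes added by prior visible addN. -/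
def wellFormed {E N : Type} (op : E → GOp N) (vis : E → E → Prop) : Prop :=
  (∀ e u v, op e = GOp.addE u v →
    (∃ a, op a = GOp.addN u ∧ visible vis a e) ∧
    (∃ a, op a = GOp.addN v ∧ visible vis a e)) ∧
  (∀ e n, op e = GOp.rmvN n → ∃ a, op a = GOp.addN n ∧ visible vis a e)

/-- Dangling edge safety for the ICS of the DD graph. -/
theorem stmt11 {E N : Type} (op : E → GOp N) (vis : E → E → Prop)
    (hwf : wellFormed op vis) :
    ∀ u v, icsEdgePresent op vis u v →
      icsNodePresent op vis u ∧ icsNodePresent op vis v := by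
  rintro u v ⟨e, hadd, hndel⟩
  constructor
  · refine ⟨e, Or.inr ⟨v, Or.inl hadd⟩, ?_⟩
    rintro ⟨e', hdel, hvis⟩
    exact hndel ⟨e', Or.inr (Or.inl ⟨hdel, e, hadd, hvis⟩), hvis⟩
  · refine ⟨e, Or.inr ⟨u, Or.inr hadd⟩, ?_⟩
    rintro ⟨e', hdel, hvis⟩
    exact hndel ⟨e', Or.inr (Or.inr ⟨hdel, e, hadd, hvis⟩), hvis⟩
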